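/- arXiv:1909.09030 — 4 statements merged into one kernel-verified Lean document; each statement's English description precedes it below -/
import Mathlib

section
/- (Splinter Lemma) Let U be a universe of separations and let A = (A_1, …, A_n) be a family of nonempty subsets of U, each closed under the involution. If A splinters, then one can pick an element a_i from each A_i so that the set {a_1, …, a_n} is nested. -/
/-!
The Splinter Lemma: in a universe of separations (a finite lattice with an
order-reversing involution), if a family of nonempty `*`-closed subsets
splinters, then one can pick an element from each set so that the chosen
elements are pairwise nested.
-/

variable {U : Type*}

/-- `star` is an order-reversing involution: `s** = s` and `r ≤ s ↔ s* ≤ r*`. -/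
def OrderReversingInvolution [Lattice U] (star : U → U) : Prop :=
  (∀ s : U, star (star s) = s) ∧ ∀ r s : U, r ≤ s ↔ star s ≤ star r

/-- Two separations are nested if they have comparable orientations. -/
def Nested [Lattice U] (star : U → U) (r s : U) : Prop :=
  r ≤ s ∨ r ≤ star s ∨ star r ≤ s ∨ star r ≤ star s

/-- Two separations cross if they are not nested. -/
def Crosses [Lattice U] (star : U → U) (r s : U) : Prop := ¬ Nested star r s

/-- `c` is a corner separation of `r` and `s`: a join of orientations of `r`
and `s`, or the involution of such a join. -/
def IsCornerSep [Lattice U] (star : U → U) (c r s : U) : Prop :=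
  ∃ r' s', (r' = r ∨ r' = star r) ∧ (s' = s ∨ s' = star s) ∧
    (c = r' ⊔ s' ∨ c = star (r' ⊔ s'))

/-- A family `A` of subsets of `U` splinters if for all `i`, `j` and every
crossing pair `a ∈ A i \ A j`, `b ∈ A j \ A i`, at least one corner
separation of `a` and `b` lies in `A i ∪ A j`. -/
def Splinters [Lattice U] (star : U → U) {I : Type*} (A : I → Set U) : Prop :=
  ∀ i j : I, ∀ a ∈ A i, a ∉ A j → ∀ b ∈ A j, b ∉ A i → Crosses star a b →
    ∃ c, IsCornerSep star c a b ∧ c ∈ A i ∪ A j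

section Helpers

variable [Lattice U] {star : U → U}

private lemma ori_star_sup (h : OrderReversingInvolution star) (r s : U) :
    star (r ⊔ s) = star r ⊓ star s := by
  apply le_antisymm
  · exact le_inf ((h.2 r (r ⊔ s)).mp le_sup_left) ((h.2 s (r ⊔ s)).mp le_sup_right)
  · have h1 : r ⊔ s ≤ star (star r ⊓ star s) := by
      apply sup_le
      · have := (h.2 (star r ⊓ star s) (star r)).mp inf_le_left
        rwa [h.1] at this
      · have := (h.2 (star r ⊓ star s) (star s)).mp inf_le_right
        rwa [h.1] at this
    have := (h.2 (r ⊔ s) (star (star r ⊓ star s))).mp h1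
    rwa [h.1] at this

private lemma nested_self (x : U) : Nested star x x := Or.inl le_rfl

private lemma nested_symm (h : OrderReversingInvolution star) {r s : U}
    (hn : Nested star r s) : Nested star s r := by
  unfold Nested at *
  rcases hn with h1 | h1 | h1 | h1
  · exact Or.inr (Or.inr (Or.inr ((h.2 r s).mp h1)))
  · have := (h.2 r (star s)).mp h1
    rw [h.1] at this
    exact Or.inr (Or.inl this)
  · have := (h.2 (star r) s).mp h1
    rw [h.1] at this
    exact Or.inr (Or.inr (Or.inl this))
  · have := (h.2 (star r) (star s)).mp h1
    rw [h.1, h.1] at this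
    exact Or.inl this

private lemma nested_star_left (h : OrderReversingInvolution star) {r s : U}
    (hn : Nested star r s) : Nested star (star r) s := by
  unfold Nested at *
  rw [h.1]
  tauto

private lemma nested_star_right (h : OrderReversingInvolution star) {r s : U}
    (hn : Nested star r s) : Nested star r (star s) := by
  unfold Nested at *
  rw [h.1]
  tauto

private lemma nested_orient (h : OrderReversingInvolution star) {r' s' x y : U}
    (hr' : r' = x ∨ r' = star x) (hs' : s' = y ∨ s' = star y)
    (hn : Nested star r' s') : Nested star x y := by
  have h1 : Nested star x s' := by
    rcases hr' with rfl | rfl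
    · exact hn
    · have := nested_star_left h hn
      rwa [h.1] at this
  rcases hs' with rfl | rfl
  · exact h1
  · have := nested_star_right h h1
    rwa [h.1] at this

private lemma corner_nested_left (h : OrderReversingInvolution star) {e x y : U}
    (hc : IsCornerSep star e x y) : Nested star x e := by
  obtain ⟨r', s', hr', hs', he⟩ := hc
  have base : Nested star r' (r' ⊔ s') := Or.inl le_sup_left
  have hx : Nested star x (r' ⊔ s') := by
    rcases hr' with rfl | rfl
    · exact base
    · have := nested_star_left h base
      rwa [h.1] at this
  rcases he with rfl | rfl
  · exact hx
  · exact nested_star_right h hx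

private lemma corner_nested_right (h : OrderReversingInvolution star) {e x y : U}
    (hc : IsCornerSep star e x y) : Nested star y e := by
  obtain ⟨r', s', hr', hs', he⟩ := hc
  have base : Nested star s' (r' ⊔ s') := Or.inl le_sup_right
  have hy : Nested star y (r' ⊔ s') := by
    rcases hs' with rfl | rfl
    · exact base
    · have := nested_star_left h base
      rwa [h.1] at this
  rcases he with rfl | rfl
  · exact hy
  · exact nested_star_right h hy

/-- The fish lemma: anything nested with both (crossing) parents of a corner
separation is nested with the corner separation. -/
private lemma fish (h : OrderReversingInvolution star) {x y u e : U}
    (hxy : Crosses star x y) (hc : IsCornerSep star e x y)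
    (hux : Nested star u x) (huy : Nested star u y) : Nested star u e := by
  obtain ⟨r', s', hr', hs', he⟩ := hc
  have hA : u ≤ r' ∨ star u ≤ r' ∨ u ≤ star r' ∨ star u ≤ star r' := by
    rcases hr' with rfl | rfl
    · unfold Nested at hux; tauto
    · unfold Nested at hux
      rw [h.1]
      tauto
  have hB : u ≤ s' ∨ star u ≤ s' ∨ u ≤ star s' ∨ star u ≤ star s' := by
    rcases hs' with rfl | rfl
    · unfold Nested at huy; tauto
    · unfold Nested at huy
      rw [h.1]
      tauto
  have key : Nested star u (r' ⊔ s') := by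
    unfold Nested
    rcases hA with h1 | h1 | h1 | h1
    · exact Or.inl (h1.trans le_sup_left)
    · exact Or.inr (Or.inr (Or.inl (h1.trans le_sup_left)))
    · rcases hB with h2 | h2 | h2 | h2
      · exact Or.inl (h2.trans le_sup_right)
      · exact Or.inr (Or.inr (Or.inl (h2.trans le_sup_right)))
      · refine Or.inr (Or.inl ?_)
        rw [ori_star_sup h]
        exact le_inf h1 h2
      · exfalso
        apply hxy
        have hsu : s' ≤ u := (h.2 s' u).mpr h2
        have hss : s' ≤ star r' := hsu.trans h1
        have : Nested star r' s' := by
          have h3 := (h.2 s' (star r')).mp hss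
          rw [h.1] at h3
          exact Or.inr (Or.inl h3)
        exact nested_orient h hr' hs' this
    · rcases hB with h2 | h2 | h2 | h2
      · exact Or.inl (h2.trans le_sup_right)
      · exact Or.inr (Or.inr (Or.inl (h2.trans le_sup_right)))
      · exfalso
        apply hxy
        have hru : r' ≤ u := (h.2 r' u).mpr h1
        have : Nested star r' s' := Or.inr (Or.inl (hru.trans h2))
        exact nested_orient h hr' hs' this
      · refine Or.inr (Or.inr (Or.inr ?_))
        rw [ori_star_sup h]
        exact le_inf h1 h2
  rcases he with rfl | rfl
  · exact key
  · exact nested_star_right h key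

end Helpers

private lemma splinter_aux [Lattice U] [Fintype U] (star : U → U)
    (hstar : OrderReversingInvolution star) (hU : Nonempty U) :
    ∀ (m : ℕ) {n : ℕ} (s : Finset (Fin n)) (A : Fin n → Set U),
      s.card ≤ m →
      (∀ i ∈ s, (A i).Nonempty) →
      (∀ i ∈ s, ∀ a ∈ A i, star a ∈ A i) →
      (∀ i ∈ s, ∀ j ∈ s, ∀ a ∈ A i, a ∉ A j → ∀ b ∈ A j, b ∉ A i →
          Crosses star a b → ∃ c, IsCornerSep star c a b ∧ c ∈ A i ∪ A j) →
      ∃ a : Fin n → U, (∀ i ∈ s, a i ∈ A i) ∧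
        ∀ i ∈ s, ∀ j ∈ s, Nested star (a i) (a j) := by
  intro m
  induction m with
  | zero =>
    intro n s A hcard hne hcl hsp
    have hs : s = ∅ := Finset.card_eq_zero.mp (Nat.le_zero.mp hcard)
    subst hs
    exact ⟨fun _ => hU.some, by simp, by simp⟩
  | succ m ih =>
    intro n s A hcard hne hcl hsp
    classical
    rcases s.eq_empty_or_nonempty with rfl | ⟨j₀, hj₀⟩
    · exact ⟨fun _ => hU.some, by simp, by simp⟩
    have hs'sub : s.erase j₀ ⊆ s := Finset.erase_subset _ _
    have hs'card : (s.erase j₀).card ≤ m := by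
      rw [Finset.card_erase_of_mem hj₀]
      omega
    obtain ⟨w, hwmem, hwnest⟩ := ih (s.erase j₀) A hs'card
      (fun i hi => hne i (hs'sub hi)) (fun i hi => hcl i (hs'sub hi))
      (fun i hi j hj => hsp i (hs'sub hi) j (hs'sub hj))
    have hfin : (A j₀).Finite := Set.toFinite _
    have hfne : hfin.toFinset.Nonempty := by
      obtain ⟨x, hx⟩ := hne j₀ hj₀
      exact ⟨x, hfin.mem_toFinset.mpr hx⟩
    obtain ⟨c₀, hc₀f, hc₀min⟩ := Finset.exists_min_image hfin.toFinset
      (fun c => ((s.erase j₀).filter fun t => ¬ Nested star c (w t)).card) hfne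
    have hc₀ : c₀ ∈ A j₀ := hfin.mem_toFinset.mp hc₀f
    set A' : Fin n → Set U := fun i => A i ∩ {u | Nested star u c₀} with hA'
    have hmemA' : ∀ i, ∀ x : U, x ∈ A' i ↔ x ∈ A i ∧ Nested star x c₀ := by
      intro i x
      rw [hA']
      exact Iff.rfl
    -- every relativized set indexed by the erased finset is nonempty
    have hne' : ∀ t ∈ s.erase j₀, (A' t).Nonempty := by
      intro t ht
      by_cases hwtc : Nested star (w t) c₀
      · exact ⟨w t, (hmemA' t (w t)).mpr ⟨hwmem t ht, hwtc⟩⟩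
      · have hcross : Crosses star c₀ (w t) := fun hn => hwtc (nested_symm hstar hn)
        by_cases hwtA : w t ∈ A j₀
        · exfalso
          have h0 : ((s.erase j₀).filter fun t' => ¬ Nested star (w t) (w t')).card = 0 := by
            rw [Finset.card_eq_zero, Finset.filter_eq_empty_iff]
            intro t' ht'
            exact not_not_intro (hwnest t ht t' ht')
          have h1 : 0 < ((s.erase j₀).filter fun t' => ¬ Nested star c₀ (w t')).card :=
            Finset.card_pos.mpr ⟨t, Finset.mem_filter.mpr ⟨ht, hcross⟩⟩
          have h2 := hc₀min (w t) (hfin.mem_toFinset.mpr hwtA)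
          simp only [h0] at h2
          omega
        · by_cases hct : c₀ ∈ A t
          · exact ⟨c₀, (hmemA' t c₀).mpr ⟨hct, nested_self c₀⟩⟩
          · obtain ⟨e, hecorner, heAB⟩ :=
              hsp j₀ hj₀ t (hs'sub ht) c₀ hc₀ hct (w t) (hwmem t ht) hwtA hcross
            rcases heAB with heA | heB
            · exfalso
              have hsub : ((s.erase j₀).filter fun t' => ¬ Nested star e (w t')) ⊆
                  ((s.erase j₀).filter fun t' => ¬ Nested star c₀ (w t')) := by
                intro t' ht'
                rw [Finset.mem_filter] at ht' ⊢
                refine ⟨ht'.1, fun hc => ht'.2 ?_⟩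
                exact nested_symm hstar
                  (fish hstar hcross hecorner (nested_symm hstar hc) (hwnest t' ht'.1 t ht))
              have htmem : t ∈ (s.erase j₀).filter fun t' => ¬ Nested star c₀ (w t') :=
                Finset.mem_filter.mpr ⟨ht, hcross⟩
              have htnot : t ∉ (s.erase j₀).filter fun t' => ¬ Nested star e (w t') := by
                rw [Finset.mem_filter]
                exact fun hcontra =>
                  hcontra.2 (nested_symm hstar (corner_nested_right hstar hecorner))
              have hlt : ((s.erase j₀).filter fun t' => ¬ Nested star e (w t')).card <
                  ((s.erase j₀).filter fun t' => ¬ Nested star c₀ (w t')).card :=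
                Finset.card_lt_card ((Finset.ssubset_iff_of_subset hsub).mpr ⟨t, htmem, htnot⟩)
              have h2 := hc₀min e (hfin.mem_toFinset.mpr heA)
              omega
            · refine ⟨e, (hmemA' t e).mpr ⟨heB, ?_⟩⟩
              exact nested_symm hstar (corner_nested_left hstar hecorner)
    have hcl' : ∀ t ∈ s.erase j₀, ∀ a ∈ A' t, star a ∈ A' t := by
      intro t ht a ha
      obtain ⟨haA, haV⟩ := (hmemA' t a).mp ha
      exact (hmemA' t (star a)).mpr ⟨hcl t (hs'sub ht) a haA, nested_star_left hstar haV⟩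
    have hsp' : ∀ i ∈ s.erase j₀, ∀ j ∈ s.erase j₀, ∀ a ∈ A' i, a ∉ A' j →
        ∀ b ∈ A' j, b ∉ A' i → Crosses star a b →
        ∃ c, IsCornerSep star c a b ∧ c ∈ A' i ∪ A' j := by
      intro i hi j hj a ha haj b hb hbi hcross
      obtain ⟨haA, haV⟩ := (hmemA' i a).mp ha
      obtain ⟨hbA, hbV⟩ := (hmemA' j b).mp hb
      have haj' : a ∉ A j := fun hmem => haj ((hmemA' j a).mpr ⟨hmem, haV⟩)
      have hbi' : b ∉ A i := fun hmem => hbi ((hmemA' i b).mpr ⟨hmem, hbV⟩)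
      obtain ⟨c, hcc, hcAB⟩ :=
        hsp i (hs'sub hi) j (hs'sub hj) a haA haj' b hbA hbi' hcross
      have hcV : Nested star c c₀ := nested_symm hstar
        (fish hstar hcross hcc (nested_symm hstar haV) (nested_symm hstar hbV))
      rcases hcAB with hc | hc
      · exact ⟨c, hcc, Or.inl ((hmemA' i c).mpr ⟨hc, hcV⟩)⟩
      · exact ⟨c, hcc, Or.inr ((hmemA' j c).mpr ⟨hc, hcV⟩)⟩
    obtain ⟨w', hw'mem, hw'nest⟩ := ih (s.erase j₀) A' hs'card hne' hcl' hsp'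
    refine ⟨fun i => if i = j₀ then c₀ else w' i, ?_, ?_⟩
    · intro i hi
      by_cases hij : i = j₀
      · subst hij
        simp only [if_pos rfl]
        exact hc₀
      · simp only [if_neg hij]
        exact ((hmemA' i (w' i)).mp (hw'mem i (Finset.mem_erase.mpr ⟨hij, hi⟩))).1
    · intro i hi j hj
      by_cases h1 : i = j₀ <;> by_cases h2 : j = j₀
      · simp only [if_pos h1, if_pos h2]
        exact nested_self c₀
      · simp only [if_pos h1, if_neg h2]
        exact nested_symm hstar
          ((hmemA' j (w' j)).mp (hw'mem j (Finset.mem_erase.mpr ⟨h2, hj⟩))).2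
      · simp only [if_neg h1, if_pos h2]
        exact ((hmemA' i (w' i)).mp (hw'mem i (Finset.mem_erase.mpr ⟨h1, hi⟩))).2
      · simp only [if_neg h1, if_neg h2]
        exact hw'nest i (Finset.mem_erase.mpr ⟨h1, hi⟩) j (Finset.mem_erase.mpr ⟨h2, hj⟩)

/-- **Splinter Lemma.** -/
theorem splinter_lemma [Lattice U] [Fintype U] (star : U → U)
    (hstar : OrderReversingInvolution star) {n : ℕ} (A : Fin n → Set U)
    (hne : ∀ i, (A i).Nonempty)
    (hclosed : ∀ i, ∀ a ∈ A i, star a ∈ A i)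
    (hsplinters : Splinters star A) :
    ∃ a : Fin n → U, (∀ i, a i ∈ A i) ∧ ∀ i j, Nested star (a i) (a j) := by
  classical
  rcases isEmpty_or_nonempty U with hE | hU
  · rcases Nat.eq_zero_or_pos n with rfl | hpos
    · exact ⟨Fin.elim0, fun i => i.elim0, fun i => i.elim0⟩
    · obtain ⟨x, -⟩ := hne ⟨0, hpos⟩
      exact (hE.false x).elim
  · obtain ⟨a, h1, h2⟩ := splinter_aux star hstar hU Finset.univ.card Finset.univ A le_rfl
      (fun i _ => hne i) (fun i _ => hclosed i) (fun i _ j _ => hsplinters i j)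
    exact ⟨a, fun i => h1 i (Finset.mem_univ i),
      fun i j => h2 i (Finset.mem_univ i) j (Finset.mem_univ j)⟩
end

section
/- Let U be a universe of separations and let r, s ∈ U be two crossing separations. Then every separation t ∈ U that is nested with both r and s is also nested with all four corner separations of r and s. -/
/-!
In a universe of separations, every separation `t` that is nested with both of
two crossing separations `r` and `s` is also nested with all four corner
separations of `r` and `s`.
-/

variable {U : Type*}

private lemma nested_star_right_s1 [Lattice U] (star : U → U)
    (hinv : ∀ s : U, star (star s) = s) {t c : U}
    (h : Nested star t c) : Nested star t (star c) := by
  unfold Nested at *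
  rw [hinv]
  tauto

private lemma corner_key [Lattice U] (star : U → U)
    (hinv : ∀ s : U, star (star s) = s)
    (hmono : ∀ r s : U, r ≤ s ↔ star s ≤ star r)
    {a b t : U} (hn : ¬ a ≤ star b)
    (h1 : Nested star t a) (h2 : Nested star t b) :
    Nested star t (a ⊔ b) := by
  have flip : ∀ x y : U, star x ≤ star y ↔ y ≤ x := fun x y => (hmono y x).symm
  have flip2 : ∀ x y : U, x ≤ star y ↔ y ≤ star x := by
    intro x y
    rw [hmono x (star y), hinv]
  rcases h1 with h1 | h1 | h1 | h1
  · exact Or.inl (h1.trans le_sup_left)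
  · -- t ≤ star a, i.e. a ≤ star t
    replace h1 : a ≤ star t := (flip2 t a).mp h1
    rcases h2 with h2 | h2 | h2 | h2
    · exact Or.inl (h2.trans le_sup_right)
    · -- b ≤ star t
      replace h2 : b ≤ star t := (flip2 t b).mp h2
      have : a ⊔ b ≤ star t := sup_le h1 h2
      exact Or.inr (Or.inl ((flip2 t (a ⊔ b)).mpr this))
    · exact Or.inr (Or.inr (Or.inl (h2.trans le_sup_right)))
    · -- star t ≤ star b, i.e. b ≤ t, so a ≤ star t ≤ star b : contradiction
      replace h2 : b ≤ t := (flip t b).mp h2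
      have : star t ≤ star b := (flip t b).mpr h2
      exact absurd (h1.trans this) hn
  · exact Or.inr (Or.inr (Or.inl (h1.trans le_sup_left)))
  · -- star t ≤ star a, i.e. a ≤ t
    replace h1 : a ≤ t := (flip t a).mp h1
    rcases h2 with h2 | h2 | h2 | h2
    · exact Or.inl (h2.trans le_sup_right)
    · -- t ≤ star b, so a ≤ star b : contradiction
      exact absurd (h1.trans h2) hn
    · exact Or.inr (Or.inr (Or.inl (h2.trans le_sup_right)))
    · -- b ≤ t
      replace h2 : b ≤ t := (flip t b).mp h2
      have : a ⊔ b ≤ t := sup_le h1 h2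
      exact Or.inr (Or.inr (Or.inr ((flip t (a ⊔ b)).mpr this)))

/-- If `t` is nested with both of the crossing separations `r` and `s`, then
`t` is nested with all four corner separations of `r` and `s`. -/
theorem nested_with_corners [Lattice U] [Fintype U] (star : U → U)
    (hstar : OrderReversingInvolution star) (r s : U)
    (hcross : Crosses star r s) (t : U)
    (htr : Nested star t r) (hts : Nested star t s) :
    ∀ c, IsCornerSep star c r s → Nested star t c := by
  obtain ⟨hinv, hmono⟩ := hstar
  rintro c ⟨r', s', hr', hs', hc⟩
  have hn : ¬ r' ≤ star s' := by
    intro h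
    apply hcross
    unfold Nested
    rcases hr' with rfl | rfl <;> rcases hs' with rfl | rfl <;>
      (try simp only [hinv] at h) <;> tauto
  have h1 : Nested star t r' := by
    rcases hr' with rfl | rfl
    · exact htr
    · exact nested_star_right_s1 star hinv htr
  have h2 : Nested star t s' := by
    rcases hs' with rfl | rfl
    · exact hts
    · exact nested_star_right_s1 star hinv hts
  have key := corner_key star hinv hmono hn h1 h2
  rcases hc with rfl | rfl
  · exact key
  · exact nested_star_right_s1 star hinv key
end

section
/- Every finite graph G has a nested set N of separations that efficiently distinguishes its maximal tangles: for every two distinct maximal tangles P, P' of G there is a separation in N that distinguishes P and P' and has minimum order among all separations of G distinguishing P and P'. (Equivalently, every finite graph has a tree-decomposition displaying its maximal tangles.) -/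
/-!
Robertson–Seymour: every finite graph has a nested set of separations
efficiently distinguishing its maximal tangles (equivalently, a
tree-decomposition displaying its maximal tangles).
-/

variable {V : Type*} [Fintype V] [DecidableEq V]

/-- An oriented separation-candidate of a graph on `V`: a pair of vertex sets. -/
abbrev GSep (V : Type*) := Finset V × Finset V

/-- The involution `(A,B) ↦ (B,A)`. -/
def sepInv (p : GSep V) : GSep V := (p.2, p.1)

/-- The partial order `(A,B) ≤ (C,D)` iff `A ⊆ C` and `B ⊇ D`. -/
def sepLE (p q : GSep V) : Prop := p.1 ⊆ q.1 ∧ q.2 ⊆ p.2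

/-- Strict version of `sepLE`. -/
def sepLT (p q : GSep V) : Prop := sepLE p q ∧ p ≠ q

/-- The join `(A,B) ∨ (C,D) = (A ∪ C, B ∩ D)`. -/
def sepJoin (p q : GSep V) : GSep V := (p.1 ∪ q.1, p.2 ∩ q.2)

/-- The meet `(A,B) ∧ (C,D) = (A ∩ C, B ∪ D)`. -/
def sepMeet (p q : GSep V) : GSep V := (p.1 ∩ q.1, p.2 ∪ q.2)

/-- The order `|(A,B)| = |A ∩ B|`. -/
def sepOrder (p : GSep V) : ℕ := (p.1 ∩ p.2).card

/-- `(A,B)` is a separation of `G`: `A ∪ B = V` and `G` has no edge between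
`A \ B` and `B \ A`. -/
def IsSep (G : SimpleGraph V) (p : GSep V) : Prop :=
  p.1 ∪ p.2 = Finset.univ ∧
    ∀ a b : V, G.Adj a b → a ∈ p.1 → a ∉ p.2 → b ∈ p.2 → b ∉ p.1 → False

/-- Two separations are nested if they have `sepLE`-comparable orientations. -/
def sepNested (p q : GSep V) : Prop :=
  sepLE p q ∨ sepLE p (sepInv q) ∨ sepLE (sepInv p) q ∨ sepLE (sepInv p) (sepInv q)

/-- `c` is a corner separation of `p` and `q`: a join of orientations of `p`
and `q`, or the involution of such a join. -/
def sepIsCorner (c p q : GSep V) : Prop :=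
  ∃ p' q', (p' = p ∨ p' = sepInv p) ∧ (q' = q ∨ q' = sepInv q) ∧
    (c = sepJoin p' q' ∨ c = sepInv (sepJoin p' q'))

/-- For three members `(A₁,B₁), (A₂,B₂), (A₃,B₃)` of a tangle there must be a
vertex or an edge of `G` not contained in any of the induced subgraphs
`G[Aᵢ]`: this expresses `G[A₁] ∪ G[A₂] ∪ G[A₃] ≠ G`. -/
def TangleAvoids (G : SimpleGraph V) (p₁ p₂ p₃ : GSep V) : Prop :=
  (∃ v : V, v ∉ p₁.1 ∧ v ∉ p₂.1 ∧ v ∉ p₃.1) ∨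
  (∃ x y : V, G.Adj x y ∧ ¬(x ∈ p₁.1 ∧ y ∈ p₁.1) ∧
    ¬(x ∈ p₂.1 ∧ y ∈ p₂.1) ∧ ¬(x ∈ p₃.1 ∧ y ∈ p₃.1))

/-- A `k`-tangle of `G`: an orientation of all separations of order `< k`
satisfying the tangle property (T). -/
def IsTangle (G : SimpleGraph V) (k : ℕ) (τ : Set (GSep V)) : Prop :=
  (∀ p ∈ τ, IsSep G p ∧ sepOrder p < k) ∧
  (∀ p : GSep V, IsSep G p → sepOrder p < k →
    (p ∈ τ ∨ sepInv p ∈ τ) ∧ (p ∈ τ → sepInv p ∈ τ → p = sepInv p)) ∧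
  (∀ p₁ ∈ τ, ∀ p₂ ∈ τ, ∀ p₃ ∈ τ, TangleAvoids G p₁ p₂ p₃)

/-- A maximal tangle of `G`: a `k`-tangle, for some `k`, that is not properly
contained in any other tangle (equivalently, not a subset of an `l`-tangle for
any `l > k`). -/
def IsMaximalTangle (G : SimpleGraph V) (τ : Set (GSep V)) : Prop :=
  (∃ k, IsTangle G k τ) ∧ ∀ τ' : Set (GSep V), (∃ l, IsTangle G l τ') →
    τ ⊆ τ' → τ' = τ

/-- `p` distinguishes the tangles `τ` and `τ'`. -/
def sepDistinguishes (p : GSep V) (τ τ' : Set (GSep V)) : Prop :=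
  (p ∈ τ ∧ sepInv p ∈ τ') ∨ (sepInv p ∈ τ ∧ p ∈ τ')

/-- `p` distinguishes `τ` and `τ'` efficiently: it does so and has minimum
order among all separations of `G` distinguishing `τ` and `τ'`. -/
def sepEffDist (G : SimpleGraph V) (p : GSep V) (τ τ' : Set (GSep V)) : Prop :=
  IsSep G p ∧ sepDistinguishes p τ τ' ∧
    ∀ q : GSep V, IsSep G q → sepDistinguishes q τ τ' → sepOrder p ≤ sepOrder q


section Basics
set_option linter.unusedSectionVars false
variable {G : SimpleGraph V} {p q t x y : GSep V} {τ τ' σ σ' : Set (GSep V)} {k l : ℕ}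

lemma sepInv_inv (p : GSep V) : sepInv (sepInv p) = p := rfl

lemma sepOrder_inv (p : GSep V) : sepOrder (sepInv p) = sepOrder p := by
  simp [sepOrder, sepInv, Finset.inter_comm]

lemma sepLE_refl (p : GSep V) : sepLE p p := ⟨subset_rfl, subset_rfl⟩

lemma sepLE_trans (h1 : sepLE p q) (h2 : sepLE q t) : sepLE p t :=
  ⟨h1.1.trans h2.1, h2.2.trans h1.2⟩

lemma sepLE_inv_le_inv (h : sepLE p q) : sepLE (sepInv q) (sepInv p) := ⟨h.2, h.1⟩

lemma sepLE_join_left (p q : GSep V) : sepLE p (sepJoin p q) :=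
  ⟨Finset.subset_union_left, Finset.inter_subset_left⟩

lemma sepLE_join_right (p q : GSep V) : sepLE q (sepJoin p q) :=
  ⟨Finset.subset_union_right, Finset.inter_subset_right⟩

lemma sepLE_inv_join (h1 : sepLE t (sepInv p)) (h2 : sepLE t (sepInv q)) :
    sepLE t (sepInv (sepJoin p q)) := by
  refine ⟨?_, ?_⟩
  · exact Finset.subset_inter h1.1 h2.1
  · exact Finset.union_subset h1.2 h2.2

lemma isSep_inv (h : IsSep G p) : IsSep G (sepInv p) := by
  refine ⟨by rw [Finset.union_comm]; exact h.1, ?_⟩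
  intro a b hab ha1 ha2 hb1 hb2
  exact h.2 b a hab.symm hb1 hb2 ha1 ha2

lemma isSep_cover (h : IsSep G p) (v : V) : v ∈ p.1 ∨ v ∈ p.2 := by
  have : v ∈ p.1 ∪ p.2 := by rw [h.1]; exact Finset.mem_univ v
  exact Finset.mem_union.mp this

lemma isSep_join (hp : IsSep G p) (hq : IsSep G q) : IsSep G (sepJoin p q) := by
  constructor
  · apply Finset.eq_univ_of_forall
    intro v
    simp only [sepJoin, Finset.mem_union, Finset.mem_inter]
    have h1 := isSep_cover hp v
    have h2 := isSep_cover hq v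
    tauto
  · intro a b hab ha1 ha2 hb1 hb2
    simp only [sepJoin, Finset.mem_union, Finset.mem_inter, not_and_or] at ha1 ha2 hb1 hb2
    have hpa := isSep_cover hp a
    have hqa := isSep_cover hq a
    have hp2 := hp.2 a b hab
    have hq2 := hq.2 a b hab
    tauto

lemma sep_submod (p q : GSep V) :
    sepOrder (sepJoin p q) + sepOrder (sepJoin (sepInv p) (sepInv q)) ≤
      sepOrder p + sepOrder q := by
  classical
  set X := (sepJoin p q).1 ∩ (sepJoin p q).2 with hX
  set Y := (sepJoin (sepInv p) (sepInv q)).1 ∩ (sepJoin (sepInv p) (sepInv q)).2 with hY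
  have hXY : X ∪ Y ⊆ (p.1 ∩ p.2) ∪ (q.1 ∩ q.2) := by
    intro v hv
    simp only [hX, hY, sepJoin, sepInv, Finset.mem_union, Finset.mem_inter] at hv ⊢
    tauto
  have hXY2 : X ∩ Y ⊆ (p.1 ∩ p.2) ∩ (q.1 ∩ q.2) := by
    intro v hv
    simp only [hX, hY, sepJoin, sepInv, Finset.mem_union, Finset.mem_inter] at hv ⊢
    tauto
  calc X.card + Y.card = (X ∪ Y).card + (X ∩ Y).card := (Finset.card_union_add_card_inter X Y).symm
    _ ≤ ((p.1 ∩ p.2) ∪ (q.1 ∩ q.2)).card + ((p.1 ∩ p.2) ∩ (q.1 ∩ q.2)).card :=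
        Nat.add_le_add (Finset.card_le_card hXY) (Finset.card_le_card hXY2)
    _ = sepOrder p + sepOrder q := Finset.card_union_add_card_inter _ _

end Basics

section Tangles
set_option linter.unusedSectionVars false
variable {G : SimpleGraph V} {p q t x y ρ : GSep V} {τ τ' σ σ' : Set (GSep V)} {k l : ℕ}

lemma tangle_isSep (ht : IsTangle G k τ) (hp : p ∈ τ) : IsSep G p := (ht.1 p hp).1

lemma tangle_order_lt (ht : IsTangle G k τ) (hp : p ∈ τ) : sepOrder p < k := (ht.1 p hp).2

lemma tangle_consistent (ht : IsTangle G k τ) (hx : x ∈ τ) (hy : IsSep G y)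
    (hord : sepOrder y < k) (hle : sepLE y x) : y ∈ τ := by
  rcases (ht.2.1 y hy hord).1 with h | h
  · exact h
  · exfalso
    have havoid := ht.2.2 x hx (sepInv y) h (sepInv y) h
    have hsx := tangle_isSep ht hx
    rcases havoid with ⟨v, hv1, hv2, _⟩ | ⟨a, b, hab, hc1, hc2, _⟩
    · simp only [sepInv] at hv2
      have := isSep_cover hsx v
      have := hle.2
      rcases this with _
      have : v ∈ y.2 := hle.2 (by tauto)
      exact hv2 this
    · simp only [sepInv, not_and_or] at hc1 hc2
      have cova := isSep_cover hsx a
      have covb := isSep_cover hsx b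
      have hl1 : ∀ v, v ∈ x.2 → v ∈ y.2 := fun v hv => hle.2 hv
      have he1 := hsx.2 a b hab
      have he2 := hsx.2 b a hab.symm
      have h1 := hl1 a
      have h2 := hl1 b
      tauto


lemma logic_q (qa1 qa2 qb1 qb2 : Prop) (cqa : qa1 ∨ qa2) (cqb : qb1 ∨ qb2)
    (he3 : qa1 → ¬qa2 → qb2 → ¬qb1 → False) (he4 : qb1 → ¬qb2 → qa2 → ¬qa1 → False)
    (n1 : ¬(qa1 ∧ qb1)) (n2 : ¬(qa2 ∧ qb2)) : False := by
  by_cases h : qa2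
  · have nqb2 : ¬qb2 := fun k => n2 ⟨h, k⟩
    have qb1 := cqb.resolve_right nqb2
    exact he4 qb1 nqb2 h (fun k => n1 ⟨k, qb1⟩)
  · have qa1 := cqa.resolve_right h
    have nqb1 : ¬qb1 := fun k => n1 ⟨qa1, k⟩
    exact he3 qa1 h (cqb.resolve_left nqb1) nqb1

lemma logic_corner (pa1 pa2 pb1 pb2 qa1 qa2 qb1 qb2 : Prop)
    (cpa : pa1 ∨ pa2) (cpb : pb1 ∨ pb2) (cqa : qa1 ∨ qa2) (cqb : qb1 ∨ qb2)
    (he1 : pa1 → ¬pa2 → pb2 → ¬pb1 → False) (he2 : pb1 → ¬pb2 → pa2 → ¬pa1 → False)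
    (he3 : qa1 → ¬qa2 → qb2 → ¬qb1 → False) (he4 : qb1 → ¬qb2 → qa2 → ¬qa1 → False)
    (hc1 : ¬(pa1 ∧ pb1)) (hc2 : ¬(qa1 ∧ qb1))
    (hc3 : ¬((pa2 ∧ qa2) ∧ (pb2 ∧ qb2))) : False := by
  have core : pa2 → pb2 → False := fun h2 hb2 =>
    logic_q qa1 qa2 qb1 qb2 cqa cqb he3 he4 hc2
      (fun k => hc3 ⟨⟨h2, k.1⟩, ⟨hb2, k.2⟩⟩)
  by_cases h1 : pa1
  · have npb1 : ¬pb1 := fun k => hc1 ⟨h1, k⟩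
    have pb2 := cpb.resolve_left npb1
    by_cases h2 : pa2
    · exact core h2 pb2
    · exact he1 h1 h2 pb2 npb1
  · have pa2 := cpa.resolve_left h1
    by_cases hb2 : pb2
    · exact core pa2 hb2
    · exact he2 (cpb.resolve_right hb2) hb2 pa2 h1

lemma logic_twocorner (pa1 pa2 pb1 pb2 qa1 qa2 qb1 qb2 : Prop)
    (cpa : pa1 ∨ pa2) (cpb : pb1 ∨ pb2) (cqa : qa1 ∨ qa2) (cqb : qb1 ∨ qb2)
    (he1 : pa1 → ¬pa2 → pb2 → ¬pb1 → False) (he2 : pb1 → ¬pb2 → pa2 → ¬pa1 → False)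
    (he3 : qa1 → ¬qa2 → qb2 → ¬qb1 → False) (he4 : qb1 → ¬qb2 → qa2 → ¬qa1 → False)
    (hc1 : ¬(pa1 ∧ pb1)) (hc2 : ¬((pa2 ∧ qa2) ∧ (pb2 ∧ qb2)))
    (hc3 : ¬((pa2 ∧ qa1) ∧ (pb2 ∧ qb1))) : False := by
  have core : pa2 → pb2 → False := fun h2 hb2 =>
    logic_q qa1 qa2 qb1 qb2 cqa cqb he3 he4
      (fun k => hc3 ⟨⟨h2, k.1⟩, ⟨hb2, k.2⟩⟩)
      (fun k => hc2 ⟨⟨h2, k.1⟩, ⟨hb2, k.2⟩⟩)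
  by_cases h1 : pa1
  · have npb1 : ¬pb1 := fun k => hc1 ⟨h1, k⟩
    have pb2 := cpb.resolve_left npb1
    by_cases h2 : pa2
    · exact core h2 pb2
    · exact he1 h1 h2 pb2 npb1
  · have pa2 := cpa.resolve_left h1
    by_cases hb2 : pb2
    · exact core pa2 hb2
    · exact he2 (cpb.resolve_right hb2) hb2 pa2 h1

lemma tangle_corner (ht : IsTangle G k τ) (hp : p ∈ τ) (hq : q ∈ τ)
    (hord : sepOrder (sepJoin p q) < k) : sepJoin p q ∈ τ := by
  have hsp := tangle_isSep ht hp
  have hsq := tangle_isSep ht hq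
  have hsj := isSep_join hsp hsq
  rcases (ht.2.1 (sepJoin p q) hsj hord).1 with h | h
  · exact h
  · exfalso
    have havoid := ht.2.2 p hp q hq (sepInv (sepJoin p q)) h
    rcases havoid with ⟨v, hv1, hv2, hv3⟩ | ⟨a, b, hab, hc1, hc2, hc3⟩
    · simp only [sepInv, sepJoin, Finset.mem_inter, not_and_or] at hv3
      have h1 := isSep_cover hsp v
      have h2 := isSep_cover hsq v
      tauto
    · simp only [sepInv, sepJoin, Finset.mem_inter, Finset.mem_union] at hc1 hc2 hc3
      have cpa := isSep_cover hsp a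
      have cpb := isSep_cover hsp b
      have cqa := isSep_cover hsq a
      have cqb := isSep_cover hsq b
      have he1 := hsp.2 a b hab
      have he2 := hsp.2 b a hab.symm
      have he3 := hsq.2 a b hab
      have he4 := hsq.2 b a hab.symm
      exact logic_corner _ _ _ _ _ _ _ _ cpa cpb cqa cqb he1 he2 he3 he4 hc1 hc2 hc3

lemma tangle_two_corners (ht : IsTangle G k τ) (hsq : IsSep G q) (hρ : ρ ∈ τ)
    (h1 : sepInv (sepJoin ρ q) ∈ τ) (h2 : sepInv (sepJoin ρ (sepInv q)) ∈ τ) : False := by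
  have hsρ := tangle_isSep ht hρ
  have havoid := ht.2.2 ρ hρ _ h1 _ h2
  rcases havoid with ⟨v, hv1, hv2, hv3⟩ | ⟨a, b, hab, hc1, hc2, hc3⟩
  · simp only [sepInv, sepJoin, Finset.mem_inter, not_and_or] at hv2 hv3
    have c1 := isSep_cover hsρ v
    have c2 := isSep_cover hsq v
    tauto
  · simp only [sepInv, sepJoin, Finset.mem_inter, Finset.mem_union] at hc1 hc2 hc3
    have cpa := isSep_cover hsρ a
    have cpb := isSep_cover hsρ b
    have cqa := isSep_cover hsq a
    have cqb := isSep_cover hsq b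
    have he1 := hsρ.2 a b hab
    have he2 := hsρ.2 b a hab.symm
    have he3 := hsq.2 a b hab
    have he4 := hsq.2 b a hab.symm
    exact logic_twocorner _ _ _ _ _ _ _ _ cpa cpb cqa cqb he1 he2 he3 he4 hc1 hc2 hc3

end Tangles

section Nested
set_option linter.unusedSectionVars false
variable {G : SimpleGraph V} {p q t x y ρ : GSep V} {τ τ' σ σ' : Set (GSep V)} {k l : ℕ}

lemma tangle_orient (ht : IsTangle G k τ) (hs : IsSep G p) (ho : sepOrder p < k) :
    p ∈ τ ∨ sepInv p ∈ τ := (ht.2.1 p hs ho).1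

lemma sepJoin_comm (p q : GSep V) : sepJoin p q = sepJoin q p := by
  simp [sepJoin, Finset.union_comm, Finset.inter_comm]

lemma sepNested_refl (p : GSep V) : sepNested p p := Or.inl (sepLE_refl p)

lemma sepNested_symm (h : sepNested p q) : sepNested q p := by
  rcases h with h | h | h | h
  · exact Or.inr (Or.inr (Or.inr (sepLE_inv_le_inv h)))
  · exact Or.inr (Or.inl (sepLE_inv_le_inv h))
  · exact Or.inr (Or.inr (Or.inl (sepLE_inv_le_inv h)))
  · exact Or.inl (sepLE_inv_le_inv h)

lemma sepNested_inv_left (h : sepNested p q) : sepNested (sepInv p) q := by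
  rcases h with h | h | h | h
  · exact Or.inr (Or.inr (Or.inl h))
  · exact Or.inr (Or.inr (Or.inr h))
  · exact Or.inl h
  · exact Or.inr (Or.inl h)

lemma sepNested_inv_right (h : sepNested p q) : sepNested p (sepInv q) := by
  rcases h with h | h | h | h
  · exact Or.inr (Or.inl h)
  · exact Or.inl h
  · exact Or.inr (Or.inr (Or.inr h))
  · exact Or.inr (Or.inr (Or.inl h))

lemma sepNested_join_right (p q : GSep V) : sepNested (sepJoin p q) q :=
  Or.inr (Or.inr (Or.inr (sepLE_inv_le_inv (sepLE_join_right p q))))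

/-- Fish lemma: a corner of two crossing separations is nested with everything
nested with both. -/
lemma sepNested_join_of_nested (hp : sepNested t p) (hq : sepNested t q)
    (hcross : ¬ sepNested p q) : sepNested t (sepJoin p q) := by
  rcases hp with h | h | h | h
  · exact Or.inl (sepLE_trans h (sepLE_join_left p q))
  · rcases hq with h' | h' | h' | h'
    · exact Or.inl (sepLE_trans h' (sepLE_join_right p q))
    · exact Or.inr (Or.inl (sepLE_inv_join h h'))
    · exact Or.inr (Or.inr (Or.inl (sepLE_trans h' (sepLE_join_right p q))))
    · exact absurd (Or.inr (Or.inl (sepLE_inv_le_inv (sepLE_trans (sepLE_inv_le_inv h') h)))) hcross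
  · exact Or.inr (Or.inr (Or.inl (sepLE_trans h (sepLE_join_left p q))))
  · rcases hq with h' | h' | h' | h'
    · exact Or.inl (sepLE_trans h' (sepLE_join_right p q))
    · exact absurd (Or.inr (Or.inl (sepLE_trans (sepLE_inv_le_inv h) h'))) hcross
    · exact Or.inr (Or.inr (Or.inl (sepLE_trans h' (sepLE_join_right p q))))
    · exact Or.inr (Or.inr (Or.inr (sepLE_inv_join h h')))

lemma sepDistinguishes_symm (h : sepDistinguishes p τ τ') : sepDistinguishes p τ' τ := by
  rcases h with ⟨h1, h2⟩ | ⟨h1, h2⟩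
  · exact Or.inr ⟨h2, h1⟩
  · exact Or.inl ⟨h2, h1⟩

lemma sepDistinguishes_inv (h : sepDistinguishes p τ τ') : sepDistinguishes (sepInv p) τ τ' := by
  rcases h with ⟨h1, h2⟩ | ⟨h1, h2⟩
  · exact Or.inr ⟨h1, h2⟩
  · exact Or.inl ⟨h1, h2⟩

end Nested

section Replacement
set_option linter.unusedSectionVars false
variable {G : SimpleGraph V} {p q t x y ρ q0 p0 : GSep V}
  {τ τ' σ σ' τ₁ τ₂ : Set (GSep V)} {k k' m m' k₁ k₂ : ℕ}

/-- If `ρ ∈ τ₁`, `ρ* ∈ τ₂` and both corners `ρ ∨ q`, `ρ ∨ q*` have order at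
most `|ρ|`, then one of these corners distinguishes `τ₁` from `τ₂`. -/
lemma dist_of_corner (hτ₁ : IsTangle G k₁ τ₁) (hτ₂ : IsTangle G k₂ τ₂)
    (hρ₁ : ρ ∈ τ₁) (hρ₂ : sepInv ρ ∈ τ₂) (hsq : IsSep G q)
    (hd1 : sepOrder (sepJoin ρ q) ≤ sepOrder ρ)
    (hd2 : sepOrder (sepJoin ρ (sepInv q)) ≤ sepOrder ρ) :
    (sepJoin ρ q ∈ τ₁ ∧ sepInv (sepJoin ρ q) ∈ τ₂) ∨
      (sepJoin ρ (sepInv q) ∈ τ₁ ∧ sepInv (sepJoin ρ (sepInv q)) ∈ τ₂) := by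
  have hsρ : IsSep G ρ := tangle_isSep hτ₁ hρ₁
  have hordρ₁ : sepOrder ρ < k₁ := tangle_order_lt hτ₁ hρ₁
  have hordρ₂ : sepOrder ρ < k₂ := by
    have := tangle_order_lt hτ₂ hρ₂; rwa [sepOrder_inv] at this
  have hs1 : IsSep G (sepJoin ρ q) := isSep_join hsρ hsq
  have hs2 : IsSep G (sepJoin ρ (sepInv q)) := isSep_join hsρ (isSep_inv hsq)
  -- both inverses lie in τ₂ by consistency
  have hi1 : sepInv (sepJoin ρ q) ∈ τ₂ := by
    apply tangle_consistent hτ₂ hρ₂ (isSep_inv hs1)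
    · rw [sepOrder_inv]; exact lt_of_le_of_lt hd1 hordρ₂
    · exact sepLE_inv_le_inv (sepLE_join_left ρ q)
  have hi2 : sepInv (sepJoin ρ (sepInv q)) ∈ τ₂ := by
    apply tangle_consistent hτ₂ hρ₂ (isSep_inv hs2)
    · rw [sepOrder_inv]; exact lt_of_le_of_lt hd2 hordρ₂
    · exact sepLE_inv_le_inv (sepLE_join_left ρ (sepInv q))
  -- not both inverses lie in τ₁
  rcases tangle_orient hτ₁ hs1 (lt_of_le_of_lt hd1 hordρ₁) with h1 | h1
  · exact Or.inl ⟨h1, hi1⟩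
  · rcases tangle_orient hτ₁ hs2 (lt_of_le_of_lt hd2 hordρ₁) with h2 | h2
    · exact Or.inr ⟨h2, hi2⟩
    · exact absurd (tangle_two_corners hτ₁ hsq hρ₁ h1 h2) (fun h => h)

end Replacement

section Main
set_option linter.unusedSectionVars false
variable {G : SimpleGraph V} {p q t x y ρ q0 p0 : GSep V}
  {τ τ' σ σ' : Set (GSep V)} {k k' m m' : ℕ}

lemma replacement_aux (hτ : IsTangle G k τ) (hτ' : IsTangle G k' τ')
    (hsp : IsSep G p) (hpτ : p ∈ τ) (hpτ' : sepInv p ∈ τ')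
    (hpmin : ∀ t, IsSep G t → sepDistinguishes t τ τ' → sepOrder p ≤ sepOrder t)
    (hσ : IsTangle G m σ) (hσ' : IsTangle G m' σ')
    (hq : sepEffDist G q σ σ')
    (hqnd : sepOrder q ≤ sepOrder p → ¬ sepDistinguishes q τ τ')
    (hcross : ¬ sepNested p q) :
    ∃ r, sepEffDist G r τ τ' ∧ sepNested r q ∧
      ∃ p' q', (p' = p ∨ p' = sepInv p) ∧ (q' = q ∨ q' = sepInv q) ∧ r = sepJoin p' q' := by
  obtain ⟨hsq, hqdist, hqmin⟩ := hq
  have hordp : sepOrder p < k := tangle_order_lt hτ hpτ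
  have hordp' : sepOrder p < k' := by
    have := tangle_order_lt hτ' hpτ'; rwa [sepOrder_inv] at this
  -- normalize the σ-side: tangles S, S' with q ∈ S, q* ∈ S'
  obtain ⟨mS, S, hS, mS', S', hS', hqS, hqS', hminq⟩ :
      ∃ mS S, IsTangle G mS S ∧ ∃ mS' S', IsTangle G mS' S' ∧ q ∈ S ∧ sepInv q ∈ S' ∧
        ∀ t, IsSep G t → sepDistinguishes t S S' → sepOrder q ≤ sepOrder t := by
    rcases hqdist with ⟨h1, h2⟩ | ⟨h1, h2⟩
    · exact ⟨m, σ, hσ, m', σ', hσ', h1, h2, hqmin⟩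
    · exact ⟨m', σ', hσ', m, σ, hσ, h2, h1, fun t ht hd =>
        hqmin t ht (sepDistinguishes_symm hd)⟩
  have hordqS : sepOrder q < mS := tangle_order_lt hS hqS
  have hordqS' : sepOrder q < mS' := by
    have := tangle_order_lt hS' hqS'; rwa [sepOrder_inv] at this
  rcases le_or_gt (sepOrder q) (sepOrder p) with hle | hlt
  · -- Case 1 : |q| ≤ |p|
    have hq_k : sepOrder q < k := lt_of_le_of_lt hle hordp
    have hq_k' : sepOrder q < k' := lt_of_le_of_lt hle hordp'
    obtain ⟨q0, hq0or, hq0τ, hq0τ'⟩ : ∃ q0, (q0 = q ∨ q0 = sepInv q) ∧ q0 ∈ τ ∧ q0 ∈ τ' := by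
      rcases tangle_orient hτ hsq hq_k with h | h
      · rcases tangle_orient hτ' hsq hq_k' with h' | h'
        · exact ⟨q, Or.inl rfl, h, h'⟩
        · exact absurd (Or.inl ⟨h, h'⟩) (hqnd hle)
      · rcases tangle_orient hτ' hsq hq_k' with h' | h'
        · exact absurd (Or.inr ⟨h, h'⟩) (hqnd hle)
        · exact ⟨sepInv q, Or.inr rfl, h, h'⟩
    have hsq0 : IsSep G q0 := by
      rcases hq0or with h | h <;> subst h
      · exact hsq
      · exact isSep_inv hsq
    have hordq0 : sepOrder q0 = sepOrder q := by
      rcases hq0or with h | h <;> subst h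
      · rfl
      · exact sepOrder_inv q
    have hnestq0 : ∀ r : GSep V, sepNested r q0 → sepNested r q := by
      rcases hq0or with h | h <;> subst h
      · exact fun r hr => hr
      · exact fun r hr => sepNested_inv_right hr
    by_cases hs1 : sepOrder (sepJoin p q0) ≤ sepOrder p
    · refine ⟨sepJoin p q0, ⟨isSep_join hsp hsq0, ?_, ?_⟩, hnestq0 _ (sepNested_join_right p q0),
        p, q0, Or.inl rfl, hq0or, rfl⟩
      · exact Or.inl ⟨tangle_corner hτ hpτ hq0τ (lt_of_le_of_lt hs1 hordp),
          tangle_consistent hτ' hpτ' (isSep_inv (isSep_join hsp hsq0))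
            (by rw [sepOrder_inv]; exact lt_of_le_of_lt hs1 hordp')
            (sepLE_inv_le_inv (sepLE_join_left p q0))⟩
      · exact fun t ht hd => le_trans hs1 (hpmin t ht hd)
    · by_cases hs2 : sepOrder (sepJoin (sepInv p) q0) ≤ sepOrder p
      · refine ⟨sepJoin (sepInv p) q0, ⟨isSep_join (isSep_inv hsp) hsq0, ?_, ?_⟩,
          hnestq0 _ (sepNested_join_right (sepInv p) q0),
          sepInv p, q0, Or.inr rfl, hq0or, rfl⟩
        · exact Or.inr ⟨tangle_consistent hτ hpτ (isSep_inv (isSep_join (isSep_inv hsp) hsq0))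
            (by rw [sepOrder_inv]; exact lt_of_le_of_lt hs2 hordp)
            (sepLE_inv_le_inv (sepLE_join_left (sepInv p) q0)),
            tangle_corner hτ' hpτ' hq0τ' (lt_of_le_of_lt hs2 hordp')⟩
        · exact fun t ht hd => le_trans hs2 (hpmin t ht hd)
      · exfalso
        push_neg at hs1 hs2
        -- both corners towards q0 are big, so the two corners towards q0* are small
        have hsub1 := sep_submod p q0
        have hsub2 := sep_submod (sepInv p) q0
        have horder_eq : sepOrder (sepJoin (sepInv (sepInv p)) (sepInv q0)) =
            sepOrder (sepJoin p (sepInv q0)) := rfl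
        rw [sepOrder_inv] at hsub2
        have ht2 : sepOrder (sepJoin (sepInv p) (sepInv q0)) < sepOrder q0 := by omega
        have ht1 : sepOrder (sepJoin p (sepInv q0)) < sepOrder q0 := by
          rw [← horder_eq]; omega
        -- tangles T ∋ q0 and T' ∋ q0*
        obtain ⟨nT, T, hT, nT', T', hT', hq0T, hq0T', hminT⟩ :
            ∃ nT T, IsTangle G nT T ∧ ∃ nT' T', IsTangle G nT' T' ∧ q0 ∈ T ∧ sepInv q0 ∈ T' ∧
              ∀ t, IsSep G t → sepDistinguishes t T T' → sepOrder q0 ≤ sepOrder t := by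
          rcases hq0or with h | h <;> subst h
          · exact ⟨mS, S, hS, mS', S', hS', hqS, hqS', hminq⟩
          · exact ⟨mS', S', hS', mS, S, hS, hqS', hqS, fun t ht hd => by
              rw [sepOrder_inv]; exact hminq t ht (sepDistinguishes_symm hd)⟩
        have hordT : sepOrder q0 < nT := tangle_order_lt hT hq0T
        have hordT' : sepOrder q0 < nT' := by
          have := tangle_order_lt hT' hq0T'; rwa [sepOrder_inv] at this
        -- name the two small corners with q0* first
        set t1 := sepJoin (sepInv q0) p with hdef1
        set t2 := sepJoin (sepInv q0) (sepInv p) with hdef2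
        have hst1 : IsSep G t1 := isSep_join (isSep_inv hsq0) hsp
        have hst2 : IsSep G t2 := isSep_join (isSep_inv hsq0) (isSep_inv hsp)
        have hot1 : sepOrder t1 < sepOrder q0 := by
          rw [hdef1, sepJoin_comm]; exact ht1
        have hot2 : sepOrder t2 < sepOrder q0 := by
          rw [hdef2, sepJoin_comm]; exact ht2
        -- their inverses lie in T by consistency towards q0
        have hinv1T : sepInv t1 ∈ T := tangle_consistent hT hq0T (isSep_inv hst1)
          (by rw [sepOrder_inv]; exact lt_trans hot1 hordT)
          (sepLE_inv_le_inv (sepLE_join_left (sepInv q0) p))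
        have hinv2T : sepInv t2 ∈ T := tangle_consistent hT hq0T (isSep_inv hst2)
          (by rw [sepOrder_inv]; exact lt_trans hot2 hordT)
          (sepLE_inv_le_inv (sepLE_join_left (sepInv q0) (sepInv p)))
        -- they cannot distinguish T and T', hence their inverses lie in T' as well
        have hinv1T' : sepInv t1 ∈ T' := by
          rcases tangle_orient hT' hst1 (lt_trans hot1 hordT') with h | h
          · exact absurd (hminT t1 hst1 (Or.inr ⟨hinv1T, h⟩)) (not_le.mpr hot1)
          · exact h
        have hinv2T' : sepInv t2 ∈ T' := by
          rcases tangle_orient hT' hst2 (lt_trans hot2 hordT') with h | h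
          · exact absurd (hminT t2 hst2 (Or.inr ⟨hinv2T, h⟩)) (not_le.mpr hot2)
          · exact h
        exact tangle_two_corners hT' hsp hq0T' hinv1T' hinv2T' 
  · -- Case 2 : |p| < |q|
    -- S and S' orient p, and cannot be distinguished by it
    have hp_mS : sepOrder p < mS := lt_trans hlt hordqS
    have hp_mS' : sepOrder p < mS' := lt_trans hlt hordqS'
    obtain ⟨p0, hp0or, hp0S, hp0S'⟩ : ∃ p0, (p0 = p ∨ p0 = sepInv p) ∧ p0 ∈ S ∧ p0 ∈ S' := by
      rcases tangle_orient hS hsp hp_mS with h | h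
      · rcases tangle_orient hS' hsp hp_mS' with h' | h'
        · exact ⟨p, Or.inl rfl, h, h'⟩
        · exact absurd (hminq p hsp (Or.inl ⟨h, h'⟩)) (not_le.mpr hlt)
      · rcases tangle_orient hS' hsp hp_mS' with h' | h'
        · exact absurd (hminq p hsp (Or.inr ⟨h, h'⟩)) (not_le.mpr hlt)
        · exact ⟨sepInv p, Or.inr rfl, h, h'⟩
    have hsp0 : IsSep G p0 := by
      rcases hp0or with h | h <;> subst h
      · exact hsp
      · exact isSep_inv hsp
    have hordp0 : sepOrder p0 = sepOrder p := by
      rcases hp0or with h | h <;> subst h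
      · rfl
      · exact sepOrder_inv p
    -- both corners with p0 on the small side have order ≥ |q|
    have h1 : ¬ sepOrder (sepJoin p0 q) < sepOrder q := by
      intro hlt1
      have hjS : sepJoin p0 q ∈ S :=
        tangle_corner hS hp0S hqS (lt_trans hlt1 hordqS)
      have hjS' : sepInv (sepJoin p0 q) ∈ S' :=
        tangle_consistent hS' hqS' (isSep_inv (isSep_join hsp0 hsq))
          (by rw [sepOrder_inv]; exact lt_trans hlt1 hordqS')
          (sepLE_inv_le_inv (sepLE_join_right p0 q))
      exact absurd (hminq _ (isSep_join hsp0 hsq) (Or.inl ⟨hjS, hjS'⟩)) (not_le.mpr hlt1)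
    have h2 : ¬ sepOrder (sepJoin p0 (sepInv q)) < sepOrder q := by
      intro hlt2
      have hjS' : sepJoin p0 (sepInv q) ∈ S' :=
        tangle_corner hS' hp0S' hqS' (lt_trans hlt2 hordqS')
      have hjS : sepInv (sepJoin p0 (sepInv q)) ∈ S :=
        tangle_consistent hS hqS (isSep_inv (isSep_join hsp0 (isSep_inv hsq)))
          (by rw [sepOrder_inv]; exact lt_trans hlt2 hordqS)
          (sepLE_inv_le_inv (sepLE_join_right p0 (sepInv q)))
      exact absurd (hminq _ (isSep_join hsp0 (isSep_inv hsq)) (Or.inr ⟨hjS, hjS'⟩))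
        (not_le.mpr hlt2)
    push_neg at h1 h2
    -- so the opposite corners have order ≤ |p|
    have hsub1 := sep_submod p0 q
    have hsub2 := sep_submod p0 (sepInv q)
    have heq2 : sepOrder (sepJoin (sepInv p0) (sepInv (sepInv q))) =
        sepOrder (sepJoin (sepInv p0) q) := rfl
    have hqq : sepOrder (sepInv q) = sepOrder q := sepOrder_inv q
    have hd1 : sepOrder (sepJoin (sepInv p0) q) ≤ sepOrder p := by
      rw [← heq2]; omega
    have hd2 : sepOrder (sepJoin (sepInv p0) (sepInv q)) ≤ sepOrder p := by omega
    have hordinvp0 : sepOrder (sepInv p0) = sepOrder p := by rw [sepOrder_inv, hordp0]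
    -- apply the corner-distinguishing lemma with ρ = p0*
    rcases hp0or with h | h <;> subst h
    · -- p0 = p, so ρ = p* ∈ τ', ρ* = p ∈ τ
      have hres := dist_of_corner hτ' hτ hpτ' hpτ hsq
        (by rw [hordinvp0]; exact hd1) (by rw [hordinvp0]; exact hd2)
      rcases hres with ⟨h1r, h2r⟩ | ⟨h1r, h2r⟩
      · exact ⟨sepJoin (sepInv p0) q,
          ⟨isSep_join (isSep_inv hsp) hsq, Or.inr ⟨h2r, h1r⟩,
            fun t ht hd => le_trans hd1 (hpmin t ht hd)⟩,
          sepNested_join_right (sepInv p0) q,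
          sepInv p0, q, Or.inr rfl, Or.inl rfl, rfl⟩
      · exact ⟨sepJoin (sepInv p0) (sepInv q),
          ⟨isSep_join (isSep_inv hsp) (isSep_inv hsq), Or.inr ⟨h2r, h1r⟩,
            fun t ht hd => le_trans hd2 (hpmin t ht hd)⟩,
          sepNested_inv_right (sepNested_join_right (sepInv p0) (sepInv q)),
          sepInv p0, sepInv q, Or.inr rfl, Or.inr rfl, rfl⟩
    · -- p0 = p*, so ρ = p ∈ τ, ρ* = p* ∈ τ'
      have hres := dist_of_corner hτ hτ' hpτ hpτ' hsq
        (by rw [← hordinvp0]; exact hd1) (by rw [← hordinvp0]; exact hd2)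
      rcases hres with ⟨h1r, h2r⟩ | ⟨h1r, h2r⟩
      · exact ⟨sepJoin (sepInv (sepInv p)) q,
          ⟨isSep_join hsp hsq, Or.inl ⟨h1r, h2r⟩,
            fun t ht hd => le_trans hd1 (hpmin t ht hd)⟩,
          sepNested_join_right (sepInv (sepInv p)) q,
          sepInv (sepInv p), q, Or.inl rfl, Or.inl rfl, rfl⟩
      · exact ⟨sepJoin (sepInv (sepInv p)) (sepInv q),
          ⟨isSep_join hsp (isSep_inv hsq), Or.inl ⟨h1r, h2r⟩,
            fun t ht hd => le_trans hd2 (hpmin t ht hd)⟩,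
          sepNested_inv_right (sepNested_join_right (sepInv (sepInv p)) (sepInv q)),
          sepInv (sepInv p), sepInv q, Or.inl rfl, Or.inr rfl, rfl⟩

lemma replacement (hτ : IsTangle G k τ) (hτ' : IsTangle G k' τ')
    (hσ : IsTangle G m σ) (hσ' : IsTangle G m' σ')
    (hp : sepEffDist G p τ τ') (hq : sepEffDist G q σ σ')
    (hqnd : sepOrder q ≤ sepOrder p → ¬ sepDistinguishes q τ τ')
    (hcross : ¬ sepNested p q) :
    ∃ r, sepEffDist G r τ τ' ∧ sepNested r q ∧
      ∃ p' q', (p' = p ∨ p' = sepInv p) ∧ (q' = q ∨ q' = sepInv q) ∧ r = sepJoin p' q' := by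
  obtain ⟨hsp, hpd, hpmin⟩ := hp
  rcases hpd with ⟨h1, h2⟩ | ⟨h1, h2⟩
  · exact replacement_aux hτ hτ' hsp h1 h2 hpmin hσ hσ' hq hqnd hcross
  · have hqnd' : sepOrder q ≤ sepOrder (sepInv p) → ¬ sepDistinguishes q τ τ' := by
      rw [sepOrder_inv]; exact hqnd
    have hpmin' : ∀ t, IsSep G t → sepDistinguishes t τ τ' → sepOrder (sepInv p) ≤ sepOrder t := by
      rw [sepOrder_inv]; exact hpmin
    obtain ⟨r, h3, h4, p', q', hp', hq', hr⟩ :=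
      replacement_aux hτ hτ' (isSep_inv hsp) h1 (h2 : sepInv (sepInv p) ∈ τ') hpmin'
        hσ hσ' hq hqnd' (fun hn => hcross (sepNested_inv_left hn))
    refine ⟨r, h3, h4, p', q', ?_, hq', hr⟩
    rcases hp' with h | h
    · exact Or.inr h
    · exact Or.inl h

lemma exists_dist (hτ : IsMaximalTangle G τ) (hτ' : IsMaximalTangle G τ') (hne : τ ≠ τ') :
    ∃ r, IsSep G r ∧ sepDistinguishes r τ τ' := by
  obtain ⟨⟨k, ht⟩, hmax⟩ := hτ
  obtain ⟨⟨k', ht'⟩, hmax'⟩ := hτ'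
  obtain ⟨a, haτ, haτ'⟩ : ∃ a ∈ τ, a ∉ τ' := by
    by_contra hc
    push_neg at hc
    exact hne.symm (hmax τ' ⟨k', ht'⟩ (fun x hx => hc x hx))
  obtain ⟨b, hbτ', hbτ⟩ : ∃ b ∈ τ', b ∉ τ := by
    by_contra hc
    push_neg at hc
    exact hne (hmax' τ ⟨k, ht⟩ (fun x hx => hc x hx))
  by_cases h : sepOrder a < k'
  · rcases tangle_orient ht' (tangle_isSep ht haτ) h with h' | h'
    · exact absurd h' haτ'
    · exact ⟨a, tangle_isSep ht haτ, Or.inl ⟨haτ, h'⟩⟩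
  · have hbk : sepOrder b < k := by
      have h1 := tangle_order_lt ht haτ
      have h2 := tangle_order_lt ht' hbτ'
      omega
    rcases tangle_orient ht (tangle_isSep ht' hbτ') hbk with h' | h'
    · exact absurd h' hbτ
    · exact ⟨b, tangle_isSep ht' hbτ', Or.inr ⟨h', hbτ'⟩⟩

end Main

/-- **Every finite graph has a nested set of separations efficiently
distinguishing its maximal tangles.** -/
theorem graph_tree_of_tangles (G : SimpleGraph V) :
    ∃ N : Set (GSep V),
      (∀ p ∈ N, IsSep G p) ∧
      (∀ p ∈ N, ∀ q ∈ N, sepNested p q) ∧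
      ∀ τ τ' : Set (GSep V), IsMaximalTangle G τ → IsMaximalTangle G τ' →
        τ ≠ τ' → ∃ p ∈ N, sepEffDist G p τ τ' := by
  classical
  set D : Set (GSep V) := {r | ∃ τ τ' : Set (GSep V), IsMaximalTangle G τ ∧
    IsMaximalTangle G τ' ∧ τ ≠ τ' ∧ sepEffDist G r τ τ'} with hD
  set Ns : Set (Finset (GSep V)) :=
    {N | (∀ p ∈ N, p ∈ D) ∧ ∀ p ∈ N, ∀ q ∈ N, sepNested p q} with hNs
  have hempty : (∅ : Finset (GSep V)) ∈ Ns := ⟨by simp, by simp⟩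
  obtain ⟨N, hN, hNmax⟩ := Set.exists_max_image Ns Finset.card (Set.toFinite _) ⟨∅, hempty⟩
  refine ⟨↑N, fun p hp => ?_, fun p hp q hq => hN.2 p hp q hq, ?_⟩
  · obtain ⟨τ, τ', _, _, _, he⟩ := hN.1 p hp
    exact he.1
  · intro τ τ' hmτ hmτ' hne
    by_contra hno
    push_neg at hno
    obtain ⟨r0, hr0⟩ := exists_dist hmτ hmτ' hne
    obtain ⟨p0, hp0, hp0min⟩ := Set.exists_min_image
      {r | IsSep G r ∧ sepDistinguishes r τ τ'} sepOrder (Set.toFinite _) ⟨r0, hr0⟩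
    have hp0eff : sepEffDist G p0 τ τ' := ⟨hp0.1, hp0.2, fun t ht htd => hp0min t ⟨ht, htd⟩⟩
    set f : GSep V → ℕ := fun r => (N.filter (fun t => ¬ sepNested r t)).card with hf
    obtain ⟨p, hpE, hpmin⟩ := Set.exists_min_image
      {r | sepEffDist G r τ τ'} f (Set.toFinite _) ⟨p0, hp0eff⟩
    simp only [Set.mem_setOf_eq] at hpE
    by_cases hall : ∀ t ∈ N, sepNested p t
    · have hpD : p ∈ D := ⟨τ, τ', hmτ, hmτ', hne, hpE⟩
      have hpN : p ∉ N := fun h => hno p (Finset.mem_coe.mpr h) hpE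
      have hins : insert p N ∈ Ns := by
        constructor
        · intro x hx
          rcases Finset.mem_insert.mp hx with h | h
          · subst h; exact hpD
          · exact hN.1 x h
        · intro x hx y hy
          rcases Finset.mem_insert.mp hx with h | h <;>
            rcases Finset.mem_insert.mp hy with h' | h'
          · rw [h, h']; exact sepNested_refl p
          · rw [h]; exact hall y h'
          · rw [h']; exact sepNested_symm (hall x h)
          · exact hN.2 x h y h'
      have hcard := hNmax _ hins
      rw [Finset.card_insert_of_notMem hpN] at hcard
      omega
    · push_neg at hall
      obtain ⟨q, hqN, hpq⟩ := hall
      obtain ⟨σ, σ', hmσ, hmσ', hneσ, hqeff⟩ := hN.1 q hqN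
      obtain ⟨m, hσt⟩ := hmσ.1
      obtain ⟨m', hσ't⟩ := hmσ'.1
      obtain ⟨k, hτt⟩ := hmτ.1
      obtain ⟨k', hτ't⟩ := hmτ'.1
      have hqnd : sepOrder q ≤ sepOrder p → ¬ sepDistinguishes q τ τ' := by
        intro hle hd
        exact hno q (Finset.mem_coe.mpr hqN)
          ⟨hqeff.1, hd, fun t hts htd => le_trans hle (hpE.2.2 t hts htd)⟩
      obtain ⟨r, hreff, hrq, p', q', hp', hq', hr⟩ :=
        replacement hτt hτ't hσt hσ't hpE hqeff hqnd hpq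
      have hcross' : ¬ sepNested p' q' := by
        intro hn
        apply hpq
        rcases hp' with h | h <;> rcases hq' with h2 | h2 <;> subst h <;> subst h2
        · exact hn
        · exact sepNested_inv_right hn
        · exact sepNested_inv_left hn
        · exact sepNested_inv_left (sepNested_inv_right hn)
      have hsub : N.filter (fun t => ¬ sepNested r t) ⊂ N.filter (fun t => ¬ sepNested p t) := by
        constructor
        · intro t htm
          simp only [Finset.mem_filter] at htm ⊢
          refine ⟨htm.1, fun hnpt => htm.2 ?_⟩
          have h1 : sepNested t p' := by
            rcases hp' with h | h <;> subst h
            · exact sepNested_symm hnpt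
            · exact sepNested_inv_right (sepNested_symm hnpt)
          have h2 : sepNested t q' := by
            rcases hq' with h | h <;> rw [h]
            · exact hN.2 t htm.1 q hqN
            · exact sepNested_inv_right (hN.2 t htm.1 q hqN)
          rw [hr]
          exact sepNested_symm (sepNested_join_of_nested h1 h2 hcross')
        · intro hcon
          have hqmem : q ∈ N.filter (fun t => ¬ sepNested p t) :=
            Finset.mem_filter.mpr ⟨hqN, hpq⟩
          have := hcon hqmem
          simp only [Finset.mem_filter] at this
          exact this.2 hrq
      exact absurd (hpmin r hreff) (not_le.mpr (Finset.card_lt_card hsub))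
end

section
/- Let U be a universe of separations, S ⊆ U a structurally submodular separation system closed under the involution, and 𝒫 a set of profiles of S. For distinct P, P' ∈ 𝒫 let A_{P,P'} = {s ∈ S : s distinguishes P and P'}. Then the family (A_{P,P'} | P ≠ P' ∈ 𝒫) splinters. -/
/-!
For a structurally submodular separation system `S` and a set `Ps` of profiles
of `S`, the family of the sets `A_{P,P'}` of separations in `S` distinguishing
a pair of distinct profiles `P ≠ P' ∈ Ps` splinters.
-/

variable {U : Type*}

/-- A `*`-closed set `S` is structurally submodular if for all `r, s ∈ S` at
least one of `r ⊔ s` and `r ⊓ s` lies in `S`. -/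
def StructSubmodular [Lattice U] (S : Set U) : Prop :=
  ∀ r ∈ S, ∀ s ∈ S, r ⊔ s ∈ S ∨ r ⊓ s ∈ S

/-- `O` is an orientation of `S`: it contains, for each `s ∈ S`, exactly one
of `s` and `star s`. -/
def Orients [Lattice U] (star : U → U) (S O : Set U) : Prop :=
  O ⊆ S ∧ ∀ s ∈ S, (s ∈ O ∨ star s ∈ O) ∧ (s ∈ O → star s ∈ O → s = star s)

/-- `O` is consistent: there are no `r, s ∈ O` with `star r < s`. -/
def Consistent [Lattice U] (star : U → U) (O : Set U) : Prop :=
  ∀ r ∈ O, ∀ s ∈ O, ¬ star r < s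

/-- A profile of `S` is a consistent orientation `P` of `S` such that for all
`r, s ∈ P` we have `star r ⊓ star s ∉ P`. -/
def IsProfile [Lattice U] (star : U → U) (S P : Set U) : Prop :=
  Orients star S P ∧ Consistent star P ∧
    ∀ r ∈ P, ∀ s ∈ P, star r ⊓ star s ∉ P

/-- `s` distinguishes `P` and `P'`: one orientation of `s` lies in `P` and the
other in `P'`. -/
def Distinguishes [Lattice U] (star : U → U) (s : U) (P P' : Set U) : Prop :=
  (s ∈ P ∧ star s ∈ P') ∨ (star s ∈ P ∧ s ∈ P')

section Aux

variable [Lattice U] {star : U → U}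

lemma star_sup_eq (hstar : OrderReversingInvolution star) (x y : U) :
    star (x ⊔ y) = star x ⊓ star y := by
  obtain ⟨inv, rev⟩ := hstar
  apply le_antisymm
  · exact le_inf ((rev x (x ⊔ y)).mp le_sup_left) ((rev y (x ⊔ y)).mp le_sup_right)
  · have h1 : x ⊔ y ≤ star (star x ⊓ star y) := by
      apply sup_le
      · have := (rev (star x ⊓ star y) (star x)).mp inf_le_left
        rwa [inv] at this
      · have := (rev (star x ⊓ star y) (star y)).mp inf_le_right
        rwa [inv] at this
    have := (rev (x ⊔ y) (star (star x ⊓ star y))).mp h1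
    rwa [inv] at this

lemma star_inf_eq (hstar : OrderReversingInvolution star) (x y : U) :
    star (x ⊓ y) = star x ⊔ star y := by
  have := star_sup_eq hstar (star x) (star y)
  rw [hstar.1, hstar.1] at this
  rw [← this, hstar.1]

lemma dist_symm (c : U) {P P' : Set U} (h : Distinguishes star c P' P) :
    Distinguishes star c P P' := by
  unfold Distinguishes at *; tauto

lemma common_orientation (hstar : OrderReversingInvolution star) {S Q Q' : Set U}
    (hQ : Orients star S Q) (hQ' : Orients star S Q') {a : U} (haS : a ∈ S)
    (hnd : ¬ Distinguishes star a Q Q') :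
    (a ∈ Q ∧ a ∈ Q') ∨ (star a ∈ Q ∧ star a ∈ Q') := by
  have h1 := (hQ.2 a haS).1
  have h2 := (hQ'.2 a haS).1
  unfold Distinguishes at hnd
  tauto

lemma crosses_conv (hstar : OrderReversingInvolution star) {a b a₀ b₀ : U}
    (ha : a₀ = a ∨ a₀ = star a) (hb : b₀ = b ∨ b₀ = star b)
    (h : Crosses star a b) : Crosses star a₀ b₀ := by
  obtain ⟨inv, -⟩ := hstar
  intro hn
  apply h
  rcases ha with rfl | rfl <;> rcases hb with rfl | rfl <;>
    simp only [Nested, inv] at hn ⊢ <;> tauto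

lemma corner_conv (hstar : OrderReversingInvolution star) {a b a₀ b₀ c : U}
    (ha : a₀ = a ∨ a₀ = star a) (hb : b₀ = b ∨ b₀ = star b)
    (h : IsCornerSep star c a₀ b₀) : IsCornerSep star c a b := by
  obtain ⟨inv, -⟩ := hstar
  obtain ⟨r', s', hr, hs, hc⟩ := h
  refine ⟨r', s', ?_, ?_, hc⟩
  · rcases ha with rfl | rfl
    · exact hr
    · rcases hr with rfl | rfl
      · exact Or.inr rfl
      · exact Or.inl (inv a)
  · rcases hb with rfl | rfl
    · exact hs
    · rcases hs with rfl | rfl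
      · exact Or.inr rfl
      · exact Or.inl (inv b)

/-- Core case of the splinter argument, in normalized orientation. -/
lemma core (hstar : OrderReversingInvolution star) {S : Set U}
    (hSclosed : ∀ s ∈ S, star s ∈ S)
    (hSsub : ∀ r ∈ S, ∀ s ∈ S, r ⊔ s ∈ S ∨ r ⊓ s ∈ S)
    {P P' Q Q' : Set U}
    (hP : IsProfile star S P) (hP' : IsProfile star S P')
    (hQ : IsProfile star S Q) (hQ' : IsProfile star S Q')
    {a b : U} (haS : a ∈ S) (hbS : b ∈ S) (hcross : Crosses star a b)
    (haP : a ∈ P) (haP' : star a ∈ P') (haQ : a ∈ Q) (haQ' : a ∈ Q')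
    (hbQ : b ∈ Q) (hbQ' : star b ∈ Q') (hbP : b ∈ P) (hbP' : b ∈ P') :
    ∃ c, c ∈ S ∧ IsCornerSep star c a b ∧
      (Distinguishes star c P P' ∨ Distinguishes star c Q Q') := by
  obtain ⟨inv, rev⟩ := hstar
  rcases hSsub a haS (star b) (hSclosed b hbS) with h | h
  · -- c = a ⊔ star b distinguishes Q, Q'
    set c := a ⊔ star b with hc
    have hcS : c ∈ S := h
    have hstarc : star c = star a ⊓ b := by
      rw [hc, star_sup_eq ⟨inv, rev⟩, inv]
    have hcQ' : c ∈ Q' := by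
      rcases (hQ'.1.2 c hcS).1 with h' | h'
      · exact h'
      · exfalso
        have hpp := hQ'.2.2 a haQ' (star b) hbQ'
        rw [inv] at hpp
        rw [hstarc] at h'
        exact hpp h'
    have hcQ : star c ∈ Q := by
      rcases (hQ.1.2 c hcS).1 with h' | h'
      · exfalso
        apply hQ.2.1 c h' b hbQ
        rw [hstarc]
        refine lt_of_le_of_ne inf_le_right (fun he => ?_)
        have hba : b ≤ star a := inf_eq_right.mp he
        have : a ≤ star b := by
          have := (rev b (star a)).mp hba
          rwa [inv] at this
        exact hcross (Or.inr (Or.inl this))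
      · exact h'
    exact ⟨c, hcS, ⟨a, star b, Or.inl rfl, Or.inr rfl, Or.inl rfl⟩,
      Or.inr (Or.inr ⟨hcQ, hcQ'⟩)⟩
  · -- c = star a ⊔ b distinguishes P, P'
    set c := star a ⊔ b with hc
    have hceq : c = star (a ⊓ star b) := by
      rw [hc, star_inf_eq ⟨inv, rev⟩, inv]
    have hcS : c ∈ S := by rw [hceq]; exact hSclosed _ h
    have hstarc : star c = a ⊓ star b := by rw [hceq, inv]
    have hcP' : c ∈ P' := by
      rcases (hP'.1.2 c hcS).1 with h' | h'
      · exact h'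
      · exfalso
        have hpp := hP'.2.2 (star a) haP' b hbP'
        rw [inv] at hpp
        rw [hstarc] at h'
        exact hpp h'
    have hcP : star c ∈ P := by
      rcases (hP.1.2 c hcS).1 with h' | h'
      · exfalso
        apply hP.2.1 c h' a haP
        rw [hstarc]
        refine lt_of_le_of_ne inf_le_left (fun he => ?_)
        have : a ≤ star b := inf_eq_left.mp he
        exact hcross (Or.inr (Or.inl this))
      · exact h'
    exact ⟨c, hcS, ⟨star a, b, Or.inr rfl, Or.inl rfl, Or.inl rfl⟩,
      Or.inl (Or.inr ⟨hcP, hcP'⟩)⟩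

end Aux

/-- The family `(A_{P,P'} | P ≠ P' ∈ Ps)` of sets of separations in `S`
distinguishing two distinct profiles of `Ps` splinters. -/
theorem profile_distinguishers_splinter [Lattice U] [Fintype U]
    (star : U → U) (hstar : OrderReversingInvolution star)
    (S : Set U) (hSclosed : ∀ s ∈ S, star s ∈ S) (hSsub : StructSubmodular S)
    (Ps : Set (Set U)) (hPs : ∀ P ∈ Ps, IsProfile star S P) :
    Splinters star
      (fun pp : {pp : Set U × Set U // pp.1 ∈ Ps ∧ pp.2 ∈ Ps ∧ pp.1 ≠ pp.2} =>
        {s | s ∈ S ∧ Distinguishes star s pp.1.1 pp.1.2}) := by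
  have inv := hstar.1
  unfold Splinters
  rintro ⟨⟨P, P'⟩, hPmem, hP'mem, hne1⟩ ⟨⟨Q, Q'⟩, hQmem, hQ'mem, hne2⟩
    a ha haj b hb hbi hcross
  simp only [Set.mem_setOf_eq] at ha hb haj hbi
  obtain ⟨haS, haD⟩ := ha
  obtain ⟨hbS, hbD⟩ := hb
  have hndA : ¬ Distinguishes star a Q Q' := fun h => haj ⟨haS, h⟩
  have hndB : ¬ Distinguishes star b P P' := fun h => hbi ⟨hbS, h⟩
  have hprofP := hPs P hPmem
  have hprofP' := hPs P' hP'mem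
  have hprofQ := hPs Q hQmem
  have hprofQ' := hPs Q' hQ'mem
  have hnormA : ∃ a₀ P₁ P₂, (a₀ = a ∨ a₀ = star a) ∧
      ((P₁ = P ∧ P₂ = P') ∨ (P₁ = P' ∧ P₂ = P)) ∧
      a₀ ∈ P₁ ∧ star a₀ ∈ P₂ ∧ a₀ ∈ Q ∧ a₀ ∈ Q' := by
    rcases common_orientation hstar hprofQ.1 hprofQ'.1 haS hndA with ⟨h1, h2⟩ | ⟨h1, h2⟩
    · rcases haD with ⟨h3, h4⟩ | ⟨h3, h4⟩
      · exact ⟨a, P, P', Or.inl rfl, Or.inl ⟨rfl, rfl⟩, h3, h4, h1, h2⟩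
      · exact ⟨a, P', P, Or.inl rfl, Or.inr ⟨rfl, rfl⟩, h4, h3, h1, h2⟩
    · rcases haD with ⟨h3, h4⟩ | ⟨h3, h4⟩
      · exact ⟨star a, P', P, Or.inr rfl, Or.inr ⟨rfl, rfl⟩, h4,
          by rw [inv]; exact h3, h1, h2⟩
      · exact ⟨star a, P, P', Or.inr rfl, Or.inl ⟨rfl, rfl⟩, h3,
          by rw [inv]; exact h4, h1, h2⟩
  have hnormB : ∃ b₀ Q₁ Q₂, (b₀ = b ∨ b₀ = star b) ∧
      ((Q₁ = Q ∧ Q₂ = Q') ∨ (Q₁ = Q' ∧ Q₂ = Q)) ∧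
      b₀ ∈ Q₁ ∧ star b₀ ∈ Q₂ ∧ b₀ ∈ P ∧ b₀ ∈ P' := by
    rcases common_orientation hstar hprofP.1 hprofP'.1 hbS hndB with ⟨h1, h2⟩ | ⟨h1, h2⟩
    · rcases hbD with ⟨h3, h4⟩ | ⟨h3, h4⟩
      · exact ⟨b, Q, Q', Or.inl rfl, Or.inl ⟨rfl, rfl⟩, h3, h4, h1, h2⟩
      · exact ⟨b, Q', Q, Or.inl rfl, Or.inr ⟨rfl, rfl⟩, h4, h3, h1, h2⟩
    · rcases hbD with ⟨h3, h4⟩ | ⟨h3, h4⟩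
      · exact ⟨star b, Q', Q, Or.inr rfl, Or.inr ⟨rfl, rfl⟩, h4,
          by rw [inv]; exact h3, h1, h2⟩
      · exact ⟨star b, Q, Q', Or.inr rfl, Or.inl ⟨rfl, rfl⟩, h3,
          by rw [inv]; exact h4, h1, h2⟩
  obtain ⟨a₀, P₁, P₂, ha₀, hP12, ha₀P₁, ha₀P₂, ha₀Q, ha₀Q'⟩ := hnormA
  obtain ⟨b₀, Q₁, Q₂, hb₀, hQ12, hb₀Q₁, hb₀Q₂, hb₀P, hb₀P'⟩ := hnormB
  have ha₀S : a₀ ∈ S := by rcases ha₀ with rfl | rfl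
                           exacts [haS, hSclosed a haS]
  have hb₀S : b₀ ∈ S := by rcases hb₀ with rfl | rfl
                           exacts [hbS, hSclosed b hbS]
  have hcross₀ : Crosses star a₀ b₀ := crosses_conv hstar ha₀ hb₀ hcross
  have hprofP₁ : IsProfile star S P₁ := by
    rcases hP12 with ⟨h, -⟩ | ⟨h, -⟩ <;> rw [h] <;> assumption
  have hprofP₂ : IsProfile star S P₂ := by
    rcases hP12 with ⟨-, h⟩ | ⟨-, h⟩ <;> rw [h] <;> assumption
  have hprofQ₁ : IsProfile star S Q₁ := by
    rcases hQ12 with ⟨h, -⟩ | ⟨h, -⟩ <;> rw [h] <;> assumption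
  have hprofQ₂ : IsProfile star S Q₂ := by
    rcases hQ12 with ⟨-, h⟩ | ⟨-, h⟩ <;> rw [h] <;> assumption
  have ha₀Q₁ : a₀ ∈ Q₁ := by
    rcases hQ12 with ⟨h, -⟩ | ⟨h, -⟩ <;> rw [h] <;> assumption
  have ha₀Q₂ : a₀ ∈ Q₂ := by
    rcases hQ12 with ⟨-, h⟩ | ⟨-, h⟩ <;> rw [h] <;> assumption
  have hb₀P₁ : b₀ ∈ P₁ := by
    rcases hP12 with ⟨h, -⟩ | ⟨h, -⟩ <;> rw [h] <;> assumption
  have hb₀P₂ : b₀ ∈ P₂ := by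
    rcases hP12 with ⟨-, h⟩ | ⟨-, h⟩ <;> rw [h] <;> assumption
  obtain ⟨c, hcS, hcorner, hdist⟩ :=
    core hstar hSclosed hSsub hprofP₁ hprofP₂ hprofQ₁ hprofQ₂ ha₀S hb₀S hcross₀
      ha₀P₁ ha₀P₂ ha₀Q₁ ha₀Q₂ hb₀Q₁ hb₀Q₂ hb₀P₁ hb₀P₂
  refine ⟨c, corner_conv hstar ha₀ hb₀ hcorner, ?_⟩
  rcases hdist with hd | hd
  · left
    refine ⟨hcS, ?_⟩
    rcases hP12 with ⟨h1, h2⟩ | ⟨h1, h2⟩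
    · rwa [h1, h2] at hd
    · rw [h1, h2] at hd
      exact dist_symm c hd
  · right
    refine ⟨hcS, ?_⟩
    rcases hQ12 with ⟨h1, h2⟩ | ⟨h1, h2⟩
    · rwa [h1, h2] at hd
    · rw [h1, h2] at hd
      exact dist_symm c hd
end
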